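/- Let $r > k \ge 2$, let $J$ be a complete $k$-uniform hypergraph on $k+r$ vertices, and let $e$ be an edge of $J$. Then there exist real numbers $\alpha_0, \dots, \alpha_k$ such that, assigning to each copy $K$ of $K_r^{(k)}$ in $J$ the weight $\omega(K) = \alpha_{|V(e) \cap V(K)|}$, for every edge $f$ of $J$ one has $\sum_{K : f \in E(K)} \omega(K) = 1$ if $f = e$ and $= 0$ otherwise; moreover $|\alpha_i| \le \frac{2^{k-i}(k-i)!}{\binom{r-k+i}{i}}$ for all $i$. -/

import Mathlib

open Finset

/-- Sum over `r`-subsets containing `f` equals sum over `(r - #f)`-subsets of the complement. -/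
lemma sum_supersets {V : Type*} [Fintype V] [DecidableEq V] (f : Finset V) (r : ℕ)
    (hfr : f.card ≤ r) (g : Finset V → ℝ) :
    ∑ K ∈ (univ.powersetCard r : Finset (Finset V)), (if f ⊆ K then g K else 0)
      = ∑ S ∈ (univ \ f).powersetCard (r - f.card), g (f ∪ S) := by
  rw [Finset.sum_ite, Finset.sum_const_zero, add_zero]
  refine Finset.sum_nbij' (fun K => K \ f) (fun S => f ∪ S) ?_ ?_ ?_ ?_ ?_
  · intro K hK
    simp only [mem_filter, mem_powersetCard] at hK ⊢
    obtain ⟨⟨-, hKr⟩, hfK⟩ := hK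
    exact ⟨sdiff_subset_sdiff (subset_univ _) le_rfl, by rw [card_sdiff_of_subset hfK, hKr]⟩
  · intro S hS
    simp only [mem_powersetCard, mem_filter] at hS ⊢
    obtain ⟨hSsub, hScard⟩ := hS
    have hdis : Disjoint f S := by
      refine Finset.disjoint_left.2 fun a haf haS => ?_
      exact (Finset.mem_sdiff.1 (hSsub haS)).2 haf
    refine ⟨⟨subset_univ _, ?_⟩, subset_union_left⟩
    rw [card_union_of_disjoint hdis, hScard]
    omega
  · intro K hK
    simp only [mem_filter] at hK
    exact union_sdiff_of_subset hK.2
  · intro S hS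
    simp only [mem_powersetCard] at hS
    refine union_sdiff_cancel_left ?_
    refine Finset.disjoint_left.2 fun a haf haS => ?_
    exact (Finset.mem_sdiff.1 (hS.1 haS)).2 haf
  · intro K hK
    simp only [mem_filter] at hK
    rw [union_sdiff_of_subset hK.2]

/-- Splitting a sum over `m`-subsets of a disjoint union according to the trace on each part. -/
lemma sum_powersetCard_union {V : Type*} [DecidableEq V] (T W : Finset V)
    (hTW : Disjoint T W) (m : ℕ) (g : Finset V → ℝ) :
    ∑ S ∈ (T ∪ W).powersetCard m, g S
      = ∑ t ∈ range (m + 1), ∑ A ∈ T.powersetCard t, ∑ B ∈ W.powersetCard (m - t),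
          g (A ∪ B) := by
  have hrw : ∀ t ∈ range (m + 1),
      ∑ A ∈ T.powersetCard t, ∑ B ∈ W.powersetCard (m - t), g (A ∪ B)
        = ∑ p ∈ T.powersetCard t ×ˢ W.powersetCard (m - t), g (p.1 ∪ p.2) := by
    intro t _
    rw [Finset.sum_product]
  rw [Finset.sum_congr rfl hrw, Finset.sum_sigma']
  refine Finset.sum_nbij' (fun S => ⟨(S ∩ T).card, (S ∩ T, S \ T)⟩)
    (fun p => p.2.1 ∪ p.2.2) ?_ ?_ ?_ ?_ ?_
  · intro S hS
    simp only [mem_powersetCard] at hS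
    obtain ⟨hSsub, hScard⟩ := hS
    have h1 : (S ∩ T).card + (S \ T).card = m := by
      rw [card_inter_add_card_sdiff, hScard]
    simp only [Finset.mem_sigma, Finset.mem_range, Finset.mem_product, mem_powersetCard]
    refine ⟨by omega, ⟨inter_subset_right, by simp⟩, ⟨?_, by omega⟩⟩
    intro a ha
    have h2 := Finset.mem_sdiff.1 ha
    rcases Finset.mem_union.1 (hSsub h2.1) with h | h
    · exact absurd h h2.2
    · exact h
  · intro p hp
    simp only [Finset.mem_sigma, Finset.mem_range, Finset.mem_product, mem_powersetCard] at hp ⊢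
    obtain ⟨ht, ⟨hA, hAc⟩, hB, hBc⟩ := hp
    have hdis : Disjoint p.2.1 p.2.2 := hTW.mono hA hB
    constructor
    · exact union_subset_union hA hB
    · rw [card_union_of_disjoint hdis, hAc, hBc]; omega
  · intro S hS
    show S ∩ T ∪ S \ T = S
    rw [union_comm, sdiff_union_inter]
  · intro p hp
    simp only [Finset.mem_sigma, Finset.mem_range, Finset.mem_product, mem_powersetCard] at hp
    obtain ⟨ht, ⟨hA, hAc⟩, hB, hBc⟩ := hp
    have hBT : Disjoint p.2.2 T := hTW.symm.mono_left hB
    have hBT1 : p.2.2 ∩ T = ∅ := by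
      rw [← Finset.disjoint_iff_inter_eq_empty]; exact hBT
    have hBT2 : p.2.2 \ T = p.2.2 := Finset.sdiff_eq_self_iff_disjoint.2 hBT
    have h1 : (p.2.1 ∪ p.2.2) ∩ T = p.2.1 := by
      rw [union_inter_distrib_right, (inter_eq_left).2 hA, hBT1]
      exact union_empty _
    have h2 : (p.2.1 ∪ p.2.2) \ T = p.2.2 := by
      rw [union_sdiff_distrib, sdiff_eq_empty_iff_subset.2 hA, hBT2]
      exact empty_union _
    obtain ⟨t, A, B⟩ := p
    simp only at h1 h2 hAc ⊢
    rw [Sigma.mk.inj_iff]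
    refine ⟨by rw [h1, hAc], ?_⟩
    rw [h1, h2]
  · intro S hS
    rw [show S ∩ T ∪ S \ T = S from by rw [union_comm, sdiff_union_inter]]

/-- The coefficients, defined by downward recursion: `bet k r d` is `α (k - d)`. -/
noncomputable def bet (k r : ℕ) : ℕ → ℝ
  | d =>
    if h : d = 0 then 1 / (r.choose k : ℝ)
    else
      (-(∑ t ∈ (Finset.Icc 1 (r - k)).attach,
          ((d.choose t.1 * (r - k + (k - d)).choose (r - k - t.1) : ℕ) : ℝ)
            * bet k r (d - t.1)))
        / (((r - k + (k - d)).choose (k - d) : ℕ) : ℝ)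
  termination_by d => d
  decreasing_by
    have := (Finset.mem_Icc.1 t.2).1
    omega

lemma bet_zero (k r : ℕ) : bet k r 0 = 1 / (r.choose k : ℝ) := by
  rw [bet]
  simp

lemma bet_succ (k r d : ℕ) (hd : d ≠ 0) :
    bet k r d =
      (-(∑ t ∈ Finset.Icc 1 (r - k),
          ((d.choose t * (r - k + (k - d)).choose (r - k - t) : ℕ) : ℝ)
            * bet k r (d - t)))
        / (((r - k + (k - d)).choose (k - d) : ℕ) : ℝ) := by
  rw [bet, dif_neg hd, ← Finset.sum_attach (Finset.Icc 1 (r - k))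
    (fun t => ((d.choose t * (r - k + (k - d)).choose (r - k - t) : ℕ) : ℝ) * bet k r (d - t))]

/-- The key triangular system identity. -/
lemma bet_system (k r : ℕ) (hkr : k < r) (d : ℕ) (hd : d ≤ k) :
    ∑ t ∈ range (r - k + 1),
        ((d.choose t * (r - k + (k - d)).choose (r - k - t) : ℕ) : ℝ) * bet k r (d - t)
      = if d = 0 then 1 else 0 := by
  have hrange : range (r - k + 1) = insert 0 (Finset.Icc 1 (r - k)) := by
    ext x
    simp only [Finset.mem_range, Finset.mem_insert, Finset.mem_Icc]
    omega
  rw [hrange, Finset.sum_insert (by simp)]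
  by_cases h0 : d = 0
  · subst h0
    have hz : ∀ t ∈ Finset.Icc 1 (r - k),
        (((0 : ℕ).choose t * (r - k + (k - 0)).choose (r - k - t) : ℕ) : ℝ) * bet k r (0 - t)
          = 0 := by
      intro t ht
      have ht1 := (Finset.mem_Icc.1 ht).1
      have hc : (0 : ℕ).choose t = 0 := Nat.choose_eq_zero_of_lt (by omega)
      simp [hc]
    rw [Finset.sum_eq_zero hz, add_zero, if_pos rfl]
    have h1 : r - k + (k - 0) = r := by omega
    have h2 : r - k - 0 = r - k := by omega
    rw [h1, h2, Nat.choose_zero_right, Nat.sub_zero, bet_zero, one_mul,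
      Nat.choose_symm hkr.le]
    have hpos : (0 : ℝ) < (r.choose k : ℝ) := by
      exact_mod_cast Nat.choose_pos hkr.le
    field_simp
  · rw [if_neg h0]
    have hC : (((r - k + (k - d)).choose (k - d) : ℕ) : ℝ) ≠ 0 := by
      exact_mod_cast (Nat.choose_pos (Nat.le_add_left _ _)).ne'
    have h1 : ((d.choose 0 * (r - k + (k - d)).choose (r - k - 0) : ℕ) : ℝ) * bet k r (d - 0)
        = (((r - k + (k - d)).choose (k - d) : ℕ) : ℝ) * bet k r d := by
      rw [Nat.choose_zero_right, one_mul, Nat.sub_zero, Nat.sub_zero]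
      have h2 := Nat.choose_symm (Nat.le_add_left (k - d) (r - k))
      rw [Nat.add_sub_cancel] at h2
      rw [h2]
    rw [h1, bet_succ k r d h0, mul_comm, div_mul_cancel₀ _ hC]
    ring

/-- The bound on the coefficients. -/
lemma bet_bound (k r : ℕ) (hkr : k < r) :
    ∀ d, d ≤ k →
      |bet k r d| ≤ 2 ^ d * (d.factorial : ℝ) / (((r - k + (k - d)).choose (k - d) : ℕ) : ℝ) := by
  intro d
  induction d using Nat.strong_induction_on with
  | _ d ih =>
    intro hd
    by_cases h0 : d = 0
    · subst h0
      have h1 : k - 0 = k := rfl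
      have h2 : r - k + k = r := by omega
      rw [bet_zero, h1, h2, pow_zero, Nat.factorial_zero]
      have hpos : (0 : ℝ) < (r.choose k : ℝ) := by exact_mod_cast Nat.choose_pos hkr.le
      rw [abs_of_pos (by positivity), Nat.cast_one, one_mul]
    · have hCpos : (0 : ℝ) < (((r - k + (k - d)).choose (k - d) : ℕ) : ℝ) := by
        exact_mod_cast Nat.choose_pos (Nat.le_add_left _ _)
      rw [bet_succ k r d h0, abs_div, abs_neg, abs_of_pos hCpos]
      refine div_le_div_of_nonneg_right ?_ hCpos.le
      calc |∑ t ∈ Finset.Icc 1 (r - k),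
              ((d.choose t * (r - k + (k - d)).choose (r - k - t) : ℕ) : ℝ) * bet k r (d - t)|
          ≤ ∑ t ∈ Finset.Icc 1 (r - k),
              |((d.choose t * (r - k + (k - d)).choose (r - k - t) : ℕ) : ℝ) * bet k r (d - t)| :=
            Finset.abs_sum_le_sum_abs _ _
        _ ≤ ∑ t ∈ Finset.Icc 1 (r - k),
              (if t ≤ d then (d.factorial : ℝ) * 2 ^ (d - t) else 0) := by
            refine Finset.sum_le_sum fun t ht => ?_
            obtain ⟨ht1, ht2⟩ := Finset.mem_Icc.1 ht
            by_cases htd : t ≤ d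
            · rw [if_pos htd]
              have hdt : d - t < d := by omega
              have hdtk : d - t ≤ k := by omega
              have hih := ih (d - t) hdt hdtk
              have hkey : k - (d - t) = (k - d) + t := by omega
              rw [hkey] at hih
              -- coefficient manipulation
              have hsymm : (r - k + (k - d)).choose (r - k - t)
                  = (r - k + (k - d)).choose ((k - d) + t) := by
                have ha : (k - d) + t ≤ r - k + (k - d) := by omega
                have hb : r - k + (k - d) - ((k - d) + t) = r - k - t := by omega
                rw [← hb, Nat.choose_symm ha]
              have hmono : (r - k + (k - d)).choose ((k - d) + t)
                  ≤ (r - k + ((k - d) + t)).choose ((k - d) + t) :=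
                Nat.choose_le_choose _ (by omega)
              have hMpos : (0 : ℝ) < ((r - k + ((k - d) + t)).choose ((k - d) + t) : ℝ) := by
                exact_mod_cast Nat.choose_pos (Nat.le_add_left _ _)
              rw [abs_mul, abs_of_nonneg (by positivity :
                (0:ℝ) ≤ ((d.choose t * (r - k + (k - d)).choose (r - k - t) : ℕ) : ℝ))]
              calc ((d.choose t * (r - k + (k - d)).choose (r - k - t) : ℕ) : ℝ)
                      * |bet k r (d - t)|
                  ≤ ((d.choose t * (r - k + ((k - d) + t)).choose ((k - d) + t) : ℕ) : ℝ)
                      * (2 ^ (d - t) * ((d - t).factorial : ℝ)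
                        / ((r - k + ((k - d) + t)).choose ((k - d) + t) : ℝ)) := by
                    refine mul_le_mul ?_ hih (abs_nonneg _) (by positivity)
                    have : d.choose t * (r - k + (k - d)).choose (r - k - t)
                        ≤ d.choose t * (r - k + ((k - d) + t)).choose ((k - d) + t) := by
                      rw [hsymm]
                      exact Nat.mul_le_mul_left _ hmono
                    exact_mod_cast this
                _ = (d.choose t : ℝ) * ((d - t).factorial : ℝ) * 2 ^ (d - t) := by
                    push_cast
                    field_simp
                _ ≤ (d.factorial : ℝ) * 2 ^ (d - t) := by
                    refine mul_le_mul_of_nonneg_right ?_ (by positivity)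
                    have : d.choose t * (d - t).factorial ≤ d.factorial := by
                      have h := Nat.choose_mul_factorial_mul_factorial htd
                      calc d.choose t * (d - t).factorial
                          ≤ (d.choose t * t.factorial) * (d - t).factorial :=
                            Nat.mul_le_mul_right _
                              (Nat.le_mul_of_pos_right _ t.factorial_pos)
                        _ = d.factorial := h
                    exact_mod_cast this
            · rw [if_neg htd]
              have hc : d.choose t = 0 := Nat.choose_eq_zero_of_lt (by omega)
              simp [hc]
        _ ≤ (d.factorial : ℝ) * (2 ^ d - 1) := by
            rw [Finset.sum_ite, Finset.sum_const_zero, add_zero]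
            have hsub : (Finset.Icc 1 (r - k)).filter (fun t => t ≤ d) ⊆ Finset.Icc 1 d := by
              intro t ht
              simp only [Finset.mem_filter, Finset.mem_Icc] at ht ⊢
              omega
            calc ∑ t ∈ (Finset.Icc 1 (r - k)).filter (fun t => t ≤ d),
                    (d.factorial : ℝ) * 2 ^ (d - t)
                ≤ ∑ t ∈ Finset.Icc 1 d, (d.factorial : ℝ) * 2 ^ (d - t) :=
                  Finset.sum_le_sum_of_subset_of_nonneg hsub (fun t _ _ => by positivity)
              _ = (d.factorial : ℝ) * ∑ t ∈ Finset.Icc 1 d, (2 : ℝ) ^ (d - t) := by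
                  rw [Finset.mul_sum]
              _ = (d.factorial : ℝ) * (2 ^ d - 1) := by
                  congr 1
                  have h1 : Finset.Icc 1 d = Finset.Ico 1 (d + 1) := by
                    rw [Finset.Ico_add_one_right_eq_Icc]
                  rw [h1, Finset.sum_Ico_eq_sum_range]
                  have h2 : ∀ i, (2 : ℝ) ^ (d - (1 + i)) = (2 : ℝ) ^ (d - 1 - i) := by
                    intro i; congr 1; omega
                  simp only [Nat.add_sub_cancel, h2]
                  rw [Finset.sum_range_reflect (fun i => (2 : ℝ) ^ i) d]
                  rw [geom_sum_eq (by norm_num : (2 : ℝ) ≠ 1) d]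
                  norm_num
        _ ≤ 2 ^ d * (d.factorial : ℝ) := by nlinarith [show (0:ℝ) < (d.factorial : ℝ) from by exact_mod_cast d.factorial_pos]

theorem stmt_9 {V : Type*} [Fintype V] [DecidableEq V]
    (k r : ℕ) (hk : 2 ≤ k) (hkr : k < r)
    (hV : Fintype.card V = k + r) (e : Finset V) (he : e.card = k) :
    ∃ α : ℕ → ℝ,
      (∀ f : Finset V, f.card = k →
        ∑ K ∈ (univ.powersetCard r : Finset (Finset V)),
            (if f ⊆ K then α ((e ∩ K).card) else 0)
          = if f = e then 1 else 0) ∧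
      ∀ i ≤ k, |α i| ≤ 2^(k-i) * ((k-i).factorial : ℝ) / ((r - k + i).choose i : ℝ) := by
  refine ⟨fun i => bet k r (k - i), ?_, ?_⟩
  · intro f hf
    set j := (e ∩ f).card with hjdef
    have hjk : j ≤ k := by
      rw [← he]; exact card_le_card inter_subset_left
    -- Step 1: reduce to complement subsets
    rw [sum_supersets f r (by omega : f.card ≤ r) (fun K => bet k r (k - (e ∩ K).card)), hf]
    -- Step 2: split complement
    have hsplit : (univ : Finset V) \ f = (e \ f) ∪ (univ \ (e ∪ f)) := by
      ext x
      simp only [Finset.mem_sdiff, Finset.mem_union, Finset.mem_univ, true_and]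
      tauto
    have hdis : Disjoint (e \ f) (univ \ (e ∪ f)) := by
      refine Finset.disjoint_left.2 fun a ha ha' => ?_
      exact (Finset.mem_sdiff.1 ha').2 (Finset.mem_union.2 (Or.inl (Finset.mem_sdiff.1 ha).1))
    rw [hsplit, sum_powersetCard_union _ _ hdis (r - k)
      (fun S => bet k r (k - (e ∩ (f ∪ S)).card))]
    -- cardinalities
    have hTcard : (e \ f).card = k - j := by
      have := card_sdiff_add_card_inter e f
      omega
    have hEUF : (e ∪ f).card = k + k - j := by
      have := card_union_add_card_inter e f
      omega
    have hWcard : (univ \ (e ∪ f)).card = r - k + j := by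
      rw [card_sdiff_of_subset (subset_univ _), card_univ, hV, hEUF]
      omega
    -- Step 3: evaluate inner sums
    have hinner : ∀ t ∈ range (r - k + 1),
        ∑ A ∈ (e \ f).powersetCard t, ∑ B ∈ (univ \ (e ∪ f)).powersetCard (r - k - t),
            bet k r (k - (e ∩ (f ∪ (A ∪ B))).card)
          = (((k - j).choose t * (r - k + j).choose (r - k - t) : ℕ) : ℝ)
              * bet k r ((k - j) - t) := by
      intro t ht
      have hval : ∀ A ∈ (e \ f).powersetCard t,
          ∀ B ∈ (univ \ (e ∪ f)).powersetCard (r - k - t),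
          (e ∩ (f ∪ (A ∪ B))).card = j + t := by
        intro A hA B hB
        rw [mem_powersetCard] at hA hB
        obtain ⟨hAs, hAc⟩ := hA
        obtain ⟨hBs, hBc⟩ := hB
        have h1 : e ∩ (f ∪ (A ∪ B)) = (e ∩ f) ∪ A := by
          ext x
          simp only [Finset.mem_inter, Finset.mem_union]
          constructor
          · rintro ⟨hxe, hxf | hxA | hxB⟩
            · exact Or.inl ⟨hxe, hxf⟩
            · exact Or.inr hxA
            · exact absurd (Finset.mem_union.2 (Or.inl hxe)) (Finset.mem_sdiff.1 (hBs hxB)).2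
          · rintro (⟨hxe, hxf⟩ | hxA)
            · exact ⟨hxe, Or.inl hxf⟩
            · exact ⟨(Finset.mem_sdiff.1 (hAs hxA)).1, Or.inr (Or.inl hxA)⟩
        have h2 : Disjoint (e ∩ f) A := by
          refine Finset.disjoint_left.2 fun a ha haA => ?_
          exact (Finset.mem_sdiff.1 (hAs haA)).2 (Finset.mem_inter.1 ha).2
        rw [h1, card_union_of_disjoint h2, hAc]
      calc ∑ A ∈ (e \ f).powersetCard t, ∑ B ∈ (univ \ (e ∪ f)).powersetCard (r - k - t),
              bet k r (k - (e ∩ (f ∪ (A ∪ B))).card)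
          = ∑ A ∈ (e \ f).powersetCard t, ∑ B ∈ (univ \ (e ∪ f)).powersetCard (r - k - t),
              bet k r (k - (j + t)) := by
            refine Finset.sum_congr rfl fun A hA => Finset.sum_congr rfl fun B hB => ?_
            rw [hval A hA B hB]
        _ = (((e \ f).powersetCard t).card : ℝ)
              * (((univ \ (e ∪ f)).powersetCard (r - k - t)).card : ℝ)
              * bet k r (k - (j + t)) := by
            rw [Finset.sum_const, Finset.sum_const, nsmul_eq_mul, nsmul_eq_mul]
            ring
        _ = (((k - j).choose t * (r - k + j).choose (r - k - t) : ℕ) : ℝ)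
              * bet k r ((k - j) - t) := by
            rw [card_powersetCard, card_powersetCard, hTcard, hWcard]
            have : k - (j + t) = (k - j) - t := by omega
            rw [this]
            push_cast
            ring
    rw [Finset.sum_congr rfl hinner]
    -- Step 4: apply the system identity
    have hsys := bet_system k r hkr (k - j) (by omega)
    have hkj : k - (k - j) = j := by omega
    rw [hkj] at hsys
    rw [hsys]
    -- identify the conditions
    have hiff : f = e ↔ k - j = 0 := by
      constructor
      · intro hfe
        have hje : j = k := by rw [hjdef, hfe, inter_self, he]
        omega
      · intro hj0
        have hj' : j = k := by omega
        have h1 : e ∩ f = e := by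
          refine Finset.eq_of_subset_of_card_le inter_subset_left ?_
          rw [hjdef] at hj'
          omega
        have h2 : e ⊆ f := by
          rw [← h1]; exact inter_subset_right
        exact (Finset.eq_of_subset_of_card_le h2 (by omega)).symm
    by_cases hfe : f = e
    · rw [if_pos hfe, if_pos (hiff.1 hfe)]
    · rw [if_neg hfe, if_neg (fun h => hfe (hiff.2 h))]
  · intro i hi
    have h := bet_bound k r hkr (k - i) (by omega)
    have h1 : k - (k - i) = i := by omega
    rw [h1] at h
    exact_mod_cast h
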